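/- Let $R$ be a Kostant root system and let $\nu \in R$ be primitive, i.e., $k\nu \in R$ for $k \in \mathbb{Z}$ implies $|k| \geq 1$. Then there exists a base $S$ of $R$ with $\nu \in S$. -/

import Mathlib

set_option linter.unusedSectionVars false
set_option maxHeartbeats 1000000

variable {V : Type*} [AddCommGroup V] [Module ℝ V]

/-- A real vector space is not a finite union of proper subspaces. -/
lemma union_proper_subspaces {X : Type*} [AddCommGroup X] [Module ℝ X]
    {ι : Type*} (s : Finset ι) (Z : ι → Submodule ℝ X) (hZ : ∀ i ∈ s, Z i ≠ ⊤) :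
    ∃ x : X, ∀ i ∈ s, x ∉ Z i := by
  classical
  induction s using Finset.induction_on with
  | empty => exact ⟨0, by simp⟩
  | @insert j s hj ih =>
    obtain ⟨u, hu⟩ := ih (fun i hi => hZ i (Finset.mem_insert_of_mem hi))
    obtain ⟨w, hw⟩ : ∃ w, w ∉ Z j := by
      by_contra h
      push_neg at h
      exact hZ j (Finset.mem_insert_self j s) (Submodule.eq_top_iff'.mpr h)
    -- bad parameters
    set Bad : Set ℝ := {t : ℝ | ∃ i ∈ insert j s, u + t • w ∈ Z i} with hBad
    have hfin : Bad.Finite := by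
      have : Bad ⊆ ⋃ i ∈ (insert j s : Finset ι), {t : ℝ | u + t • w ∈ Z i} := by
        intro t ht; obtain ⟨i, hi, h⟩ := ht
        exact Set.mem_biUnion hi h
      refine Set.Finite.subset (Set.Finite.biUnion (Finset.finite_toSet _) ?_) this
      intro i hi
      refine Set.Subsingleton.finite ?_
      intro t1 h1 t2 h2
      by_contra hne
      have hsub : (t1 - t2) • w ∈ Z i := by
        have := (Z i).sub_mem h1 h2
        simpa [sub_smul] using (by simpa using this : (u + t1 • w) - (u + t2 • w) ∈ Z i)
      have hwZ : w ∈ Z i := by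
        have ht : t1 - t2 ≠ 0 := sub_ne_zero.mpr hne
        have := (Z i).smul_mem (t1 - t2)⁻¹ hsub
        simpa [smul_smul, inv_mul_cancel₀ ht] using this
      rcases Finset.mem_insert.mp hi with rfl | hi'
      · exact hw hwZ
      · have huZ : u ∈ Z i := by
          have := (Z i).sub_mem h1 ((Z i).smul_mem t1 hwZ)
          simpa using this
        exact hu i hi' huZ
    obtain ⟨t, ht⟩ : ∃ t : ℝ, t ∉ Bad := by
      have := hfin.infinite_compl
      obtain ⟨t, ht⟩ := this.nonempty
      exact ⟨t, ht⟩
    exact ⟨u + t • w, fun i hi h => ht ⟨i, hi, h⟩⟩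

/-- helper: a positive `ε` making `ε * |h a|` smaller than all the positive `g a`. -/
lemma exists_eps {α : Type*} (s : Finset α) (g h : α → ℝ) (hg : ∀ a ∈ s, 0 < g a) :
    ∃ ε : ℝ, 0 < ε ∧ ∀ a ∈ s, ε * |h a| < g a := by
  classical
  rcases s.eq_empty_or_nonempty with rfl | hne
  · exact ⟨1, one_pos, by simp⟩
  · refine ⟨s.inf' hne (fun a => g a / (|h a| + 1)), ?_, ?_⟩
    · rw [Finset.lt_inf'_iff]
      intro a ha
      exact div_pos (hg a ha) (by positivity)
    · intro a ha
      have h1 : s.inf' hne (fun a => g a / (|h a| + 1)) ≤ g a / (|h a| + 1) :=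
        Finset.inf'_le _ ha
      have h2 : 0 < s.inf' hne (fun a => g a / (|h a| + 1)) := by
        rw [Finset.lt_inf'_iff]
        intro b hb
        exact div_pos (hg b hb) (by positivity)
      calc s.inf' hne (fun a => g a / (|h a| + 1)) * |h a|
          < s.inf' hne (fun a => g a / (|h a| + 1)) * (|h a| + 1) := by
            apply mul_lt_mul_of_pos_left (by linarith) h2
        _ ≤ g a / (|h a| + 1) * (|h a| + 1) := by
            apply mul_le_mul_of_nonneg_right h1 (by positivity)
        _ = g a := by field_simp

/-- separating functional vanishing on `ν`. -/
lemma exists_dual_vanish {W : Type*} [AddCommGroup W] [Module ℝ W] (ν μ : W)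
    (hμ : μ ∉ Submodule.span ℝ {ν}) :
    ∃ f : W →ₗ[ℝ] ℝ, f ν = 0 ∧ f μ ≠ 0 := by
  set p := Submodule.span ℝ {ν}
  have hμ0 : p.mkQ μ ≠ 0 := by
    simpa [Submodule.Quotient.mk_eq_zero] using hμ
  obtain ⟨g, hg⟩ : ∃ g : Module.Dual ℝ (W ⧸ p), g (p.mkQ μ) ≠ 0 := by
    by_contra h
    push_neg at h
    exact hμ0 ((Module.forall_dual_apply_eq_zero_iff ℝ _).mp h)
  refine ⟨g.comp p.mkQ, ?_, hg⟩
  have h1 : p.mkQ ν = 0 := by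
    simpa [p, Submodule.Quotient.mk_eq_zero] using Submodule.mem_span_singleton_self (R := ℝ) ν
  simp [h1]

lemma exists_dual_ne_zero {W : Type*} [AddCommGroup W] [Module ℝ W] (ν : W) (hν : ν ≠ 0) :
    ∃ f : W →ₗ[ℝ] ℝ, f ν ≠ 0 := by
  by_contra h
  push_neg at h
  exact hν ((Module.forall_dual_apply_eq_zero_iff ℝ _).mp h)


section RS

variable (f : V → (V →ₗ[ℝ] ℝ))

/-- reflection associated to `a`. -/
noncomputable def σ (a : V) : V →ₗ[ℝ] V := LinearMap.id - (f a).smulRight a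

end RS

section RS2

variable {Δ : Set V} {f : V → (V →ₗ[ℝ] ℝ)}

lemma sigma_apply (a x : V) : σ f a x = x - f a x • a := rfl

variable (hfin : Δ.Finite) (h0 : (0:V) ∉ Δ) (hneg : ∀ a ∈ Δ, -a ∈ Δ)
    (hf2 : ∀ a ∈ Δ, f a a = 2)
    (hfint : ∀ a ∈ Δ, ∀ b ∈ Δ, ∃ n : ℤ, f a b = (n:ℝ))
    (hrefl : ∀ a ∈ Δ, ∀ b ∈ Δ, b - f a b • a ∈ Δ)

section
include hf2

lemma sigma_invol {a : V} (ha : a ∈ Δ) (x : V) : σ f a (σ f a x) = x := by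
  simp only [sigma_apply, map_sub, map_smul, hf2 a ha, smul_eq_mul]
  module

lemma sigma_mem (hrefl : ∀ a ∈ Δ, ∀ b ∈ Δ, b - f a b • a ∈ Δ)
    {a b : V} (ha : a ∈ Δ) (hb : b ∈ Δ) : σ f a b ∈ Δ := hrefl a ha b hb

end

include hfin h0 in
/-- Uniqueness of coroot functionals on `Δ`. -/
lemma coroot_unique {a : V} (ha : a ∈ Δ) (g₁ g₂ : V →ₗ[ℝ] ℝ)
    (h₁2 : g₁ a = 2) (h₂2 : g₂ a = 2)
    (h₁r : ∀ b ∈ Δ, b - g₁ b • a ∈ Δ) (h₂r : ∀ b ∈ Δ, b - g₂ b • a ∈ Δ)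
    {b : V} (hb : b ∈ Δ) : g₁ b = g₂ b := by
  by_contra hne
  have hstep : ∀ x ∈ Δ, x + (g₂ x - g₁ x) • a ∈ Δ ∧
      ∀ y : V, (x + y) + (g₂ (x + y) - g₁ (x + y)) • a
        = x + y + (g₂ x - g₁ x) • a + (g₂ y - g₁ y) • a := by
    intro x hx
    constructor
    · have h1 : x - g₂ x • a ∈ Δ := h₂r x hx
      have h2 : (x - g₂ x • a) - g₁ (x - g₂ x • a) • a ∈ Δ := h₁r _ h1
      have : (x - g₂ x • a) - g₁ (x - g₂ x • a) • a = x + (g₂ x - g₁ x) • a := by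
        simp only [map_sub, map_smul, h₁2, smul_eq_mul]
        module
      rwa [this] at h2
    · intro y
      simp only [map_add]
      module
  -- iterate
  set c : ℝ := g₂ b - g₁ b with hc
  have hcne : c ≠ 0 := fun h => hne (by linarith [sub_eq_zero.mp h])
  have hiter : ∀ n : ℕ, b + (n : ℝ) • (c • a) ∈ Δ := by
    intro n
    induction n with
    | zero => simpa using hb
    | succ n ih =>
      have h1 := (hstep _ ih).1
      have h2 : (b + (n:ℝ) • (c • a)) + (g₂ (b + (n:ℝ) • (c • a)) - g₁ (b + (n:ℝ) • (c • a))) • a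
          = b + ((n:ℝ)+1) • (c • a) := by
        simp only [map_add, map_smul, smul_eq_mul, h₁2, h₂2]
        simp only [hc]
        module
      rw [h2] at h1
      push_cast
      exact h1
  have hane : a ≠ 0 := fun h => h0 (h ▸ ha)
  have hinj : Function.Injective (fun n : ℕ => b + (n : ℝ) • (c • a)) := by
    intro m n h
    simp only [add_right_inj] at h
    have : ((m:ℝ) - n) • (c • a) = 0 := by
      rw [sub_smul, h, sub_self]
    rcases smul_eq_zero.mp this with h' | h'
    · have : (m:ℝ) = n := by
        have := sub_eq_zero.mp h'
        exact_mod_cast this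
      exact_mod_cast this
    · rcases smul_eq_zero.mp h' with h'' | h''
      · exact absurd h'' hcne
      · exact absurd h'' hane
  exact (Set.infinite_of_injective_forall_mem hinj (fun n => hiter n)) hfin

include hfin h0 hf2 hrefl in
/-- conjugation rule for coroots: `f (σ a b) x = f b (σ a x)` for `x ∈ Δ`. -/
lemma coroot_conj {a b : V} (ha : a ∈ Δ) (hb : b ∈ Δ) {x : V} (hx : x ∈ Δ) :
    f (σ f a b) x = f b (σ f a x) := by
  have hc : σ f a b ∈ Δ := hrefl a ha b hb
  have key := coroot_unique hfin h0 hc (f (σ f a b)) ((f b).comp (σ f a))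
    (hf2 _ hc)
    (by simp only [LinearMap.comp_apply, sigma_invol hf2 ha, hf2 b hb])
    (hrefl _ hc)
    ?_ hx
  · exact key
  · intro y hy
    have h1 : σ f a y ∈ Δ := hrefl a ha y hy
    have h2 : σ f b (σ f a y) ∈ Δ := hrefl b hb _ h1
    have h3 : σ f a (σ f b (σ f a y)) ∈ Δ := hrefl a ha _ h2
    have : σ f a (σ f b (σ f a y)) = y - ((f b).comp (σ f a)) y • (σ f a b) := by
      simp only [sigma_apply, LinearMap.comp_apply, map_sub, map_smul, smul_eq_mul]
      have h2a : f a a = 2 := hf2 a ha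
      simp only [h2a]
      module
    rwa [this] at h3
end RS2


section BBdef

variable {Δ : Set V}
variable (f : V → (V →ₗ[ℝ] ℝ)) (hfin : Δ.Finite)

/-- the sum-of-coroot-squares bilinear form. -/
noncomputable def BB : V →ₗ[ℝ] V →ₗ[ℝ] ℝ :=
  LinearMap.mk₂ ℝ (fun x y => ∑ a ∈ hfin.toFinset, f a x * f a y)
    (by intro x x' y; simp [add_mul, Finset.sum_add_distrib])
    (by intro c x y; simp only [map_smul, smul_eq_mul, Finset.mul_sum]
        exact Finset.sum_congr rfl (fun i _ => by ring))
    (by intro x y y'; simp [mul_add, Finset.sum_add_distrib])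
    (by intro c x y; simp only [map_smul, smul_eq_mul, Finset.mul_sum]
        exact Finset.sum_congr rfl (fun i _ => by ring))

lemma BB_apply (x y : V) : BB f hfin x y = ∑ a ∈ hfin.toFinset, f a x * f a y := rfl

lemma BB_symm (x y : V) : BB f hfin x y = BB f hfin y x := by
  simp [BB_apply, mul_comm]

lemma BB_self_nonneg (x : V) : 0 ≤ BB f hfin x x := by
  rw [BB_apply]
  exact Finset.sum_nonneg (fun a _ => mul_self_nonneg _)

lemma BB_root_self (hf2 : ∀ a ∈ Δ, f a a = 2) {a : V} (ha : a ∈ Δ) :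
    0 < BB f hfin a a := by
  have h4 : (4:ℝ) ≤ BB f hfin a a := by
    rw [BB_apply]
    have := Finset.single_le_sum (f := fun c => f c a * f c a)
      (fun c _ => mul_self_nonneg _) (hfin.mem_toFinset.mpr ha)
    simp only [hf2 a ha] at this
    linarith
  linarith

end BBdef
section Geometry

variable {Δ : Set V} {f : V → (V →ₗ[ℝ] ℝ)}
variable (hfin : Δ.Finite) (h0 : (0:V) ∉ Δ)
    (hneg : ∀ a ∈ Δ, -a ∈ Δ)
    (hf2 : ∀ a ∈ Δ, f a a = 2)
    (hfint : ∀ a ∈ Δ, ∀ b ∈ Δ, ∃ n : ℤ, f a b = (n:ℝ))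
    (hrefl : ∀ a ∈ Δ, ∀ b ∈ Δ, b - f a b • a ∈ Δ)

include hfin h0 hf2 hrefl in
lemma conj_span {a c : V} (ha : a ∈ Δ) (hc : c ∈ Δ) {x : V}
    (hx : x ∈ Submodule.span ℝ Δ) : f (σ f c a) x = f a (σ f c x) := by
  have hsub : Submodule.span ℝ Δ ≤ LinearMap.ker ((f (σ f c a)) - (f a).comp (σ f c)) := by
    rw [Submodule.span_le]
    intro y hy
    simp only [SetLike.mem_coe, LinearMap.mem_ker, LinearMap.sub_apply, LinearMap.comp_apply]
    rw [coroot_conj hfin h0 hf2 hrefl hc ha hy, sub_self]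
  have := hsub hx
  simp only [LinearMap.mem_ker, LinearMap.sub_apply, LinearMap.comp_apply, sub_eq_zero] at this
  exact this

lemma sigma_span {c : V} (hc : c ∈ Δ) {x : V} (hx : x ∈ Submodule.span ℝ Δ) :
    σ f c x ∈ Submodule.span ℝ Δ := by
  rw [sigma_apply]
  exact Submodule.sub_mem _ hx (Submodule.smul_mem _ _ (Submodule.subset_span hc))

include hfin h0 hf2 hrefl in
lemma BB_inv {c : V} (hc : c ∈ Δ) {x y : V} (hx : x ∈ Submodule.span ℝ Δ)
    (hy : y ∈ Submodule.span ℝ Δ) :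
    BB f hfin (σ f c x) (σ f c y) = BB f hfin x y := by
  rw [BB_apply, BB_apply]
  refine Finset.sum_nbij' (i := fun a => σ f c a) (j := fun a => σ f c a) ?_ ?_ ?_ ?_ ?_
  · intro a ha
    rw [Set.Finite.mem_toFinset] at ha ⊢
    exact hrefl c hc a ha
  · intro a ha
    rw [Set.Finite.mem_toFinset] at ha ⊢
    exact hrefl c hc a ha
  · intro a _; exact sigma_invol hf2 hc a
  · intro a _; exact sigma_invol hf2 hc a
  · intro a ha
    rw [Set.Finite.mem_toFinset] at ha
    simp only [conj_span hfin h0 hf2 hrefl ha hc hx,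
      conj_span hfin h0 hf2 hrefl ha hc hy]

include hfin h0 hf2 hrefl in
lemma BB_formula {a : V} (ha : a ∈ Δ) {x : V} (hx : x ∈ Submodule.span ℝ Δ) :
    2 * BB f hfin a x = f a x * BB f hfin a a := by
  have hinv := BB_inv hfin h0 hf2 hrefl ha (Submodule.subset_span ha) hx
  have hσa : σ f a a = -a := by
    rw [sigma_apply, hf2 a ha]; module
  rw [hσa, sigma_apply] at hinv
  simp only [map_neg, map_sub, map_smul, LinearMap.neg_apply, LinearMap.sub_apply,
    LinearMap.smul_apply, smul_eq_mul] at hinv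
  linarith

include hfin h0 hneg hf2 hrefl in
lemma fixed_zero {x : V} (hx : x ∈ Submodule.span ℝ Δ) (hfa : ∀ a ∈ Δ, f a x = 0) :
    x = 0 := by
  classical
  by_contra hxne
  have hmapσ : ∀ a : V, a ∈ Δ → ∀ u ∈ Submodule.span ℝ Δ, σ f a u ∈ Submodule.span ℝ Δ :=
    fun a ha u hu => sigma_span ha hu
  set U := ↥(Submodule.span ℝ Δ) with hU
  set Δ' : Set U := Subtype.val ⁻¹' Δ with hΔ'
  have hΔ'fin : Δ'.Finite := hfin.preimage Subtype.val_injective.injOn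
  have hspan' : Submodule.span ℝ Δ' = ⊤ := by
    apply Submodule.map_injective_of_injective
      (Submodule.injective_subtype (Submodule.span ℝ Δ))
    rw [Submodule.map_span, Submodule.map_top, Submodule.range_subtype]
    have himg : (Submodule.span ℝ Δ).subtype '' Δ' = Δ := by
      ext v; constructor
      · rintro ⟨⟨w, hw⟩, hmem, rfl⟩; exact hmem
      · intro hv; exact ⟨⟨v, Submodule.subset_span hv⟩, hv, rfl⟩
    rw [himg]
  let σr : ∀ a, a ∈ Δ → Module.End ℝ U := fun a ha => (σ f a).restrict (hmapσ a ha)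
  have σr_apply : ∀ a (ha : a ∈ Δ) (u : U), ((σr a ha u : U) : V) = σ f a (u : V) :=
    fun a ha u => rfl
  set G : Set (Module.End ℝ U) := {g | ∃ a, ∃ ha : a ∈ Δ, g = σr a ha} with hG
  set M := Submonoid.closure G with hM
  have hpres : ∀ g ∈ M, ∀ d : U, (d : V) ∈ Δ → ((g d : U) : V) ∈ Δ := by
    set N : Submonoid (Module.End ℝ U) :=
      { carrier := {g | ∀ d : U, (d : V) ∈ Δ → ((g d : U) : V) ∈ Δ}
        one_mem' := by intro d hd; simpa using hd
        mul_mem' := by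
          intro g h hg hh d hd
          have := hg (h d) (hh d hd)
          simpa [Module.End.mul_apply] using this } with hN
    have hle : M ≤ N := Submonoid.closure_le.mpr (by
      rintro g ⟨a, ha, rfl⟩
      intro d hd
      rw [σr_apply a ha d]
      exact hrefl a ha _ hd)
    exact fun g hg => hle hg
  set x' : U := (⟨x, hx⟩ : U) with hx'
  have hfix : ∀ g ∈ M, g x' = x' := by
    set N : Submonoid (Module.End ℝ U) :=
      { carrier := {g | g x' = x'}
        one_mem' := rfl
        mul_mem' := by
          intro g h hg hh
          show (g * h) x' = x'
          rw [Module.End.mul_apply, show h x' = x' from hh, show g x' = x' from hg] } with hN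
    have hle : M ≤ N := Submonoid.closure_le.mpr (by
      rintro g ⟨a, ha, rfl⟩
      show (σr a ha) x' = x'
      apply Subtype.ext
      rw [σr_apply a ha, sigma_apply, hfa a ha]
      simp)
    exact fun g hg => hle hg
  haveI : Finite ↥Δ' := hΔ'fin.to_subtype
  have hMfin : (M : Set (Module.End ℝ U)).Finite := by
    have hrinj : Function.Injective (fun (g : Module.End ℝ U) (d : ↥Δ') => g ↑d) := by
      intro g h hgh
      apply LinearMap.ext_on hspan'
      intro u hu
      exact congrFun hgh ⟨u, hu⟩
    apply Set.Finite.of_finite_image ?_ hrinj.injOn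
    apply Set.Finite.subset (Set.Finite.pi (fun _ : ↥Δ' => hΔ'fin))
    rintro _ ⟨g, hg, rfl⟩
    rw [Set.mem_univ_pi]
    intro d
    exact hpres g hg ↑d d.2
  obtain ⟨l, hl⟩ : ∃ l : U →ₗ[ℝ] ℝ, l x' ≠ 0 := by
    apply exists_dual_ne_zero x'
    intro h
    exact hxne (congrArg Subtype.val h)
  set Mf := hMfin.toFinset with hMf
  set μ : U →ₗ[ℝ] ℝ := ∑ g ∈ Mf, l ∘ₗ g with hμ
  have hinv : ∀ a (ha : a ∈ Δ) (u : U), μ (σr a ha u) = μ u := by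
    intro a ha u
    have hσmem : σr a ha ∈ M := Submonoid.subset_closure ⟨a, ha, rfl⟩
    have hsq : σr a ha * σr a ha = 1 := by
      apply LinearMap.ext; intro w
      apply Subtype.ext
      simp only [Module.End.mul_apply, Module.End.one_apply]
      rw [σr_apply a ha, σr_apply a ha]
      exact sigma_invol hf2 ha (w : V)
    rw [hμ]
    simp only [LinearMap.sum_apply, LinearMap.comp_apply]
    refine Finset.sum_nbij' (i := fun g => g * σr a ha) (j := fun g => g * σr a ha)
      ?_ ?_ ?_ ?_ ?_
    · intro g hg
      rw [Set.Finite.mem_toFinset] at hg ⊢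
      exact M.mul_mem hg hσmem
    · intro g hg
      rw [Set.Finite.mem_toFinset] at hg ⊢
      exact M.mul_mem hg hσmem
    · intro g _; show g * σr a ha * σr a ha = g; rw [mul_assoc, hsq, mul_one]
    · intro g _; show g * σr a ha * σr a ha = g; rw [mul_assoc, hsq, mul_one]
    · intro g _; rfl
  have hvan : ∀ a (ha : a ∈ Δ), μ (⟨a, Submodule.subset_span ha⟩ : U) = 0 := by
    intro a ha
    set a' : U := (⟨a, Submodule.subset_span ha⟩ : U) with ha'
    have hdiff : ∀ u : U, u - σr a ha u = f a (u : V) • a' := by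
      intro u
      apply Subtype.ext
      rw [AddSubgroupClass.coe_sub, σr_apply a ha u, SetLike.val_smul, sigma_apply]
      have hval : (a' : V) = a := rfl
      rw [hval]
      module
    have h2 : ∀ u : U, μ u - μ (σr a ha u) = f a (u:V) * μ a' := by
      intro u
      calc μ u - μ (σr a ha u) = μ (u - σr a ha u) := (map_sub μ _ _).symm
        _ = μ (f a (u:V) • a') := by rw [hdiff]
        _ = f a (u:V) * μ a' := by rw [map_smul]; simp
    have h3 := h2 a'
    rw [hinv a ha a'] at h3
    have hfa2 : f a ((a' : U) : V) = 2 := hf2 a ha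
    rw [hfa2] at h3
    linarith
  have hμ0 : μ = 0 := by
    apply LinearMap.ext_on hspan'
    intro u hu
    have hu' : (u : V) ∈ Δ := hu
    have := hvan (u : V) hu'
    have heq : (⟨(u:V), Submodule.subset_span hu'⟩ : U) = u := Subtype.ext rfl
    rw [heq] at this
    simpa using this
  have hneq : μ x' ≠ 0 := by
    rw [hμ]
    simp only [LinearMap.sum_apply, LinearMap.comp_apply]
    rw [Finset.sum_congr rfl (fun g hg => by
      rw [hfix g (hMfin.mem_toFinset.mp hg)])]
    rw [Finset.sum_const]
    have hcard : 0 < Mf.card :=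
      Finset.card_pos.mpr ⟨1, hMfin.mem_toFinset.mpr (M.one_mem)⟩
    simp only [nsmul_eq_mul]
    exact mul_ne_zero (by exact_mod_cast hcard.ne') hl
  rw [hμ0] at hneq
  simp at hneq

include hfin hneg h0 hf2 hrefl in
lemma BB_definite {x : V} (hx : x ∈ Submodule.span ℝ Δ)
    (hBB : BB f hfin x x = 0) : x = 0 := by
  apply fixed_zero hfin h0 hneg hf2 hrefl hx
  intro a ha
  rw [BB_apply] at hBB
  have := (Finset.sum_eq_zero_iff_of_nonneg
    (fun c _ => mul_self_nonneg (f c x))).mp hBB a (hfin.mem_toFinset.mpr ha)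
  exact mul_self_eq_zero.mp this

lemma BB_cauchy (x y : V) : (BB f hfin x y)^2 ≤ BB f hfin x x * BB f hfin y y := by
  have key : ∀ t : ℝ, 0 ≤ BB f hfin y y * (t*t) + (2 * BB f hfin x y) * t + BB f hfin x x := by
    intro t
    have h := BB_self_nonneg f hfin (x + t • y)
    have hexp : BB f hfin (x + t • y) (x + t • y)
        = BB f hfin y y * (t*t) + (2 * BB f hfin x y) * t + BB f hfin x x := by
      simp only [map_add, map_smul, LinearMap.add_apply, LinearMap.smul_apply, smul_eq_mul]
      rw [BB_symm f hfin y x]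
      ring
    rw [hexp] at h
    exact h
  have hd := discrim_le_zero key
  rw [discrim] at hd
  nlinarith [hd]

include hfin h0 hneg hf2 hrefl in
lemma BB_prop {a b : V} (ha : a ∈ Submodule.span ℝ Δ) (hb : b ∈ Submodule.span ℝ Δ)
    (hbb : 0 < BB f hfin b b)
    (heq : (BB f hfin a b)^2 = BB f hfin a a * BB f hfin b b) :
    a = (BB f hfin a b / BB f hfin b b) • b := by
  set t := BB f hfin a b / BB f hfin b b with ht
  have hz : BB f hfin (a - t • b) (a - t • b) = 0 := by
    simp only [map_sub, map_smul, LinearMap.sub_apply, LinearMap.smul_apply, smul_eq_mul]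
    rw [BB_symm f hfin b a]
    rw [ht]
    field_simp
    ring_nf
    nlinarith [heq]
  have hzmem : a - t • b ∈ Submodule.span ℝ Δ :=
    Submodule.sub_mem _ ha (Submodule.smul_mem _ _ hb)
  have := BB_definite hfin h0 hneg hf2 hrefl hzmem hz
  have : a - t • b = 0 := this
  linear_combination (norm := module) this

include hfin h0 hneg hf2 hfint hrefl in
lemma key_lemma {a b : V} (ha : a ∈ Δ) (hb : b ∈ Δ) (hne : a ≠ b)
    (hpos : 0 < BB f hfin a b) : a - b ∈ Δ := by
  have haS : a ∈ Submodule.span ℝ Δ := Submodule.subset_span ha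
  have hbS : b ∈ Submodule.span ℝ Δ := Submodule.subset_span hb
  have hBaa : 0 < BB f hfin a a := BB_root_self f hfin hf2 ha
  have hBbb : 0 < BB f hfin b b := BB_root_self f hfin hf2 hb
  have hfab : 2 * BB f hfin a b = f a b * BB f hfin a a :=
    BB_formula hfin h0 hf2 hrefl ha hbS
  have hfba : 2 * BB f hfin a b = f b a * BB f hfin b b := by
    rw [BB_symm f hfin a b]
    exact BB_formula hfin h0 hf2 hrefl hb haS
  obtain ⟨m₁, hm₁⟩ := hfint a ha b hb
  obtain ⟨m₂, hm₂⟩ := hfint b hb a ha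
  have hm₁pos : 0 < m₁ := by
    have : (0:ℝ) < (m₁:ℝ) := by rw [← hm₁]; nlinarith
    exact_mod_cast this
  have hm₂pos : 0 < m₂ := by
    have : (0:ℝ) < (m₂:ℝ) := by rw [← hm₂]; nlinarith
    exact_mod_cast this
  have hCS := BB_cauchy (f := f) hfin a b
  have hprod : (m₁:ℝ) * m₂ ≤ 4 := by
    rw [← hm₁, ← hm₂]
    have h1 : f a b * BB f hfin a a = 2 * BB f hfin a b := hfab.symm
    have h2 : f b a * BB f hfin b b = 2 * BB f hfin a b := hfba.symm
    nlinarith [mul_pos hBaa hBbb]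
  have hprodZ : m₁ * m₂ ≤ 4 := by exact_mod_cast hprod
  by_cases hm : m₁ * m₂ = 4
  · -- proportional case
    have heq4 : (m₁:ℝ) * m₂ = 4 := by exact_mod_cast hm
    have heq : (BB f hfin a b)^2 = BB f hfin a a * BB f hfin b b := by
      rw [← hm₁] at heq4
      rw [← hm₂] at heq4
      nlinarith [hfab, hfba, mul_pos hBaa hBbb, hCS]
    have hprop := BB_prop hfin h0 hneg hf2 hrefl haS hbS hBbb heq
    set t := BB f hfin a b / BB f hfin b b with htdef
    have htpos : 0 < t := div_pos hpos hBbb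
    have ht2 : (m₂:ℝ) = 2 * t := by
      rw [← hm₂, htdef]
      field_simp
      linarith [hfba]
    have hm₂le : m₂ ≤ 4 := by
      nlinarith [hm₁pos, hm₂pos, hm]
    interval_cases m₂
    · -- m₂ = 1 : t = 1/2, a = (1/2) • b, so a - b = -a
      have htval : t = 1/2 := by
        have : (1:ℝ) = 2 * t := by exact_mod_cast ht2
        linarith
      rw [htval] at hprop
      have : a - b = -a := by
        rw [hprop]; module
      rw [this]
      exact hneg a ha
    · -- m₂ = 2 : t = 1, a = b, contradiction
      exfalso
      have htval : t = 1 := by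
        have : (2:ℝ) = 2 * t := by exact_mod_cast ht2
        linarith
      rw [htval, one_smul] at hprop
      exact hne hprop
    · -- m₂ = 3 impossible since m₁ * 3 = 4
      exfalso; omega
    · -- m₂ = 4 : t = 2, a = 2b, a - b = b
      have htval : t = 2 := by
        have : (4:ℝ) = 2 * t := by exact_mod_cast ht2
        linarith
      rw [htval] at hprop
      have : a - b = b := by
        rw [hprop]; module
      rw [this]
      exact hb
  · -- product < 4 : one of the pairings is 1
    have hlt : m₁ * m₂ < 4 := lt_of_le_of_ne hprodZ hm
    have hone : m₁ = 1 ∨ m₂ = 1 := by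
      by_contra hcon
      push_neg at hcon
      have h1 : 2 ≤ m₁ := by omega
      have h2 : 2 ≤ m₂ := by omega
      nlinarith
    rcases hone with h1 | h2
    · have hf1 : f a b = 1 := by rw [hm₁, h1]; norm_num
      have hmem := hrefl a ha b hb
      rw [hf1, one_smul] at hmem
      have hab : a - b = -(b - a) := by abel
      rw [hab]
      exact hneg _ hmem
    · have : f b a = 1 := by rw [hm₂, h2]; norm_num
      have hmem := hrefl b hb a ha
      rw [this, one_smul] at hmem
      exact hmem

end Geometry
section Positive

variable {V2 : Type*}

/-- positive elements w.r.t. a functional. -/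
def Pos (Δ : Set V) (F : V →ₗ[ℝ] ℝ) : Set V := {a | a ∈ Δ ∧ 0 < F a}

/-- indecomposable positive elements. -/
def Indec (Δ : Set V) (F : V →ₗ[ℝ] ℝ) : Set V :=
  {a | a ∈ Pos Δ F ∧ ¬∃ b c, b ∈ Pos Δ F ∧ c ∈ Pos Δ F ∧ a = b + c}

variable {Δ : Set V} {f : V → (V →ₗ[ℝ] ℝ)}
variable (hfin : Δ.Finite) (h0 : (0:V) ∉ Δ)
    (hneg : ∀ a ∈ Δ, -a ∈ Δ)
    (hf2 : ∀ a ∈ Δ, f a a = 2)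
    (hfint : ∀ a ∈ Δ, ∀ b ∈ Δ, ∃ n : ℤ, f a b = (n:ℝ))
    (hrefl : ∀ a ∈ Δ, ∀ b ∈ Δ, b - f a b • a ∈ Δ)
    (F : V →ₗ[ℝ] ℝ)

include hfin in
lemma pos_decomp {a : V} (haP : a ∈ Pos Δ F) :
    ∃ n : V →₀ ℕ, ↑n.support ⊆ Indec Δ F ∧ a = n.sum (fun v k => (k:ℝ) • v) := by
  classical
  generalize hN : (hfin.toFinset.filter (fun b => F b < F a)).card = N
  induction N using Nat.strong_induction_on generalizing a with
  | _ N ih =>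
    by_cases hind : a ∈ Indec Δ F
    · refine ⟨Finsupp.single a 1, ?_, ?_⟩
      · intro v hv
        rw [Finset.mem_coe, Finsupp.support_single_ne_zero a one_ne_zero] at hv
        rw [Finset.mem_singleton] at hv
        subst hv; exact hind
      · rw [Finsupp.sum_single_index] <;> simp
    · have hdec : ∃ b c, b ∈ Pos Δ F ∧ c ∈ Pos Δ F ∧ a = b + c := by
        by_contra hcon
        exact hind ⟨haP, hcon⟩
      obtain ⟨b, c, hbP, hcP, habc⟩ := hdec
      have hFb : F b < F a := by
        have : F a = F b + F c := by rw [habc, map_add]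
        linarith [hcP.2]
      have hFc : F c < F a := by
        have : F a = F b + F c := by rw [habc, map_add]
        linarith [hbP.2]
      have hcard : ∀ d : V, d ∈ Pos Δ F → F d < F a →
          (hfin.toFinset.filter (fun e => F e < F d)).card < N := by
        intro d hdP hdlt
        rw [← hN]
        apply Finset.card_lt_card
        constructor
        · intro e he
          rw [Finset.mem_filter] at he ⊢
          exact ⟨he.1, lt_trans he.2 hdlt⟩
        · intro hsub
          have : d ∈ hfin.toFinset.filter (fun e => F e < F d) := by
            apply hsub
            rw [Finset.mem_filter]
            exact ⟨hfin.mem_toFinset.mpr hdP.1, hdlt⟩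
          rw [Finset.mem_filter] at this
          exact lt_irrefl _ this.2
      obtain ⟨nb, hnb1, hnb2⟩ := ih _ (hcard b hbP hFb) hbP rfl
      obtain ⟨nc, hnc1, hnc2⟩ := ih _ (hcard c hcP hFc) hcP rfl
      refine ⟨nb + nc, ?_, ?_⟩
      · intro v hv
        rw [Finset.mem_coe] at hv
        have := Finsupp.support_add hv
        rw [Finset.mem_union] at this
        rcases this with h | h
        · exact hnb1 h
        · exact hnc1 h
      · rw [Finsupp.sum_add_index' (by intro v; simp) (by intro v k1 k2; push_cast; rw [add_smul])]
        rw [habc, hnb2, hnc2]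

include hfin h0 hneg hf2 hfint hrefl in
lemma indec_obtuse (hF : ∀ a ∈ Δ, F a ≠ 0) {α β : V}
    (hα : α ∈ Indec Δ F) (hβ : β ∈ Indec Δ F) (hne : α ≠ β) :
    BB f hfin α β ≤ 0 := by
  by_contra hpos
  push_neg at hpos
  have hαΔ : α ∈ Δ := hα.1.1
  have hβΔ : β ∈ Δ := hβ.1.1
  have hγ : α - β ∈ Δ := key_lemma hfin h0 hneg hf2 hfint hrefl hαΔ hβΔ hne hpos
  rcases lt_or_gt_of_ne (hF _ hγ) with hlt | hgt
  · -- F(α-β) < 0 : β decomposable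
    have h1 : β - α ∈ Δ := by
      have := hneg _ hγ
      rwa [neg_sub] at this
    have h2 : β - α ∈ Pos Δ F := ⟨h1, by rw [map_sub]; rw [map_sub] at hlt; linarith⟩
    exact hβ.2 ⟨β - α, α, h2, hα.1, by abel⟩
  · -- F(α-β) > 0 : α decomposable
    have h2 : α - β ∈ Pos Δ F := ⟨hγ, hgt⟩
    exact hα.2 ⟨α - β, β, h2, hβ.1, by abel⟩

include hfin h0 hneg hf2 hfint hrefl in
lemma indec_independent (hF : ∀ a ∈ Δ, F a ≠ 0) :
    ∀ l : V →₀ ℝ, ↑l.support ⊆ Indec Δ F →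
      l.sum (fun v c => c • v) = 0 → l = 0 := by
  classical
  intro l hsupp hsum
  set A := l.support.filter (fun v => 0 < l v) with hA
  set C := l.support.filter (fun v => l v < 0) with hC
  have hsplit : l.support = A ∪ C := by
    ext v
    simp only [hA, hC, Finset.mem_union, Finset.mem_filter, Finsupp.mem_support_iff]
    constructor
    · intro hv
      rcases lt_or_gt_of_ne hv with h | h
      · exact Or.inr ⟨hv, h⟩
      · exact Or.inl ⟨hv, h⟩
    · rintro (⟨hv, _⟩ | ⟨hv, _⟩) <;> exact hv
  have hdisj : Disjoint A C := by
    rw [Finset.disjoint_left]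
    intro v hv1 hv2
    rw [hA, Finset.mem_filter] at hv1
    rw [hC, Finset.mem_filter] at hv2
    linarith [hv1.2, hv2.2]
  set x := ∑ v ∈ A, l v • v with hx
  have hx2 : x = ∑ w ∈ C, (-(l w)) • w := by
    have hs : ∑ v ∈ A, l v • v + ∑ w ∈ C, l w • w = 0 := by
      rw [← Finset.sum_union hdisj, ← hsplit]
      rw [Finsupp.sum] at hsum
      exact hsum
    have : x = -∑ w ∈ C, l w • w := by rw [hx]; linear_combination (norm := abel) hs
    rw [this, ← Finset.sum_neg_distrib]
    apply Finset.sum_congr rfl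
    intro w _
    rw [neg_smul]
  have hAI : ∀ v ∈ A, v ∈ Indec Δ F := fun v hv =>
    hsupp (Finset.mem_coe.mpr (hsplit ▸ Finset.mem_union_left _ hv))
  have hCI : ∀ v ∈ C, v ∈ Indec Δ F := fun v hv =>
    hsupp (Finset.mem_coe.mpr (hsplit ▸ Finset.mem_union_right _ hv))
  have hxspan : x ∈ Submodule.span ℝ Δ := by
    rw [hx]
    apply Submodule.sum_mem
    intro v hv
    exact Submodule.smul_mem _ _ (Submodule.subset_span (hAI v hv).1.1)
  have hBxx : BB f hfin x x ≤ 0 := by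
    nth_rewrite 2 [hx2]
    rw [map_sum]
    apply Finset.sum_nonpos
    intro w hw
    have hexp : BB f hfin x (-(l w) • w) = (-(l w)) * ∑ v ∈ A, l v * BB f hfin v w := by
      rw [map_smul, smul_eq_mul, hx, map_sum, LinearMap.sum_apply]
      congr 1
      apply Finset.sum_congr rfl
      intro v hv
      rw [map_smul, LinearMap.smul_apply, smul_eq_mul]
    rw [hexp]
    apply mul_nonpos_of_nonneg_of_nonpos
    · rw [hC, Finset.mem_filter] at hw
      linarith [hw.2]
    · apply Finset.sum_nonpos
      intro v hv
      apply mul_nonpos_of_nonneg_of_nonpos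
      · rw [hA, Finset.mem_filter] at hv
        linarith [hv.2]
      · apply indec_obtuse hfin h0 hneg hf2 hfint hrefl F hF (hAI v hv) (hCI w hw)
        intro heq
        exact (Finset.disjoint_left.mp hdisj hv) (heq ▸ hw)
  have hx0 : x = 0 := by
    apply BB_definite hfin h0 hneg hf2 hrefl hxspan
    exact le_antisymm hBxx (BB_self_nonneg f hfin x)
  have hAempty : A = ∅ := by
    by_contra hne
    have hFx : F x = 0 := by rw [hx0, map_zero]
    rw [hx, map_sum] at hFx
    have hpos : 0 < ∑ v ∈ A, F (l v • v) := by
      apply Finset.sum_pos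
      · intro v hv
        rw [map_smul, smul_eq_mul]
        rw [hA, Finset.mem_filter] at hv
        exact mul_pos hv.2 (hAI v (by rw [hA, Finset.mem_filter]; exact hv)).1.2
      · exact Finset.nonempty_of_ne_empty hne
    linarith
  have hCempty : C = ∅ := by
    by_contra hne
    have hFx : F x = 0 := by rw [hx0, map_zero]
    rw [hx2, map_sum] at hFx
    have hpos : 0 < ∑ v ∈ C, F ((-(l v)) • v) := by
      apply Finset.sum_pos
      · intro v hv
        rw [map_smul, smul_eq_mul]
        rw [hC, Finset.mem_filter] at hv
        apply mul_pos (by linarith [hv.2]) (hCI v (by rw [hC, Finset.mem_filter]; exact hv)).1.2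
      · exact Finset.nonempty_of_ne_empty hne
    linarith
  apply Finsupp.support_eq_empty.mp
  rw [hsplit, hAempty, hCempty]
  simp

end Positive
section Glue

variable {W : Type*} [AddCommGroup W] [Module ℝ W]

lemma image_indep (π : V →ₗ[ℝ] W) (Sg SgI : Set V)
    (hSgind : ∀ l : V →₀ ℝ, ↑l.support ⊆ Sg → l.sum (fun v c => c • v) = 0 → l = 0)
    (hSgI : SgI ⊆ Sg)
    (hker : ∀ y : V, y ∈ Submodule.span ℝ Sg → π y = 0 → y ∈ Submodule.span ℝ SgI)
    (T : Finset V) (hT : ↑T ⊆ Sg \ SgI)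
    (g : V → ℝ) (hg : ∑ v ∈ T, g v • π v = 0) : ∀ v ∈ T, g v = 0 := by
  classical
  have hy0 : π (∑ v ∈ T, g v • v) = 0 := by
    rw [map_sum]
    simpa [map_smul] using hg
  have hymem : (∑ v ∈ T, g v • v) ∈ Submodule.span ℝ Sg := by
    apply Submodule.sum_mem
    intro v hv
    exact Submodule.smul_mem _ _ (Submodule.subset_span (hT hv).1)
  obtain ⟨d, hd1, hd2⟩ := Submodule.mem_span_set.mp (hker _ hymem hy0)
  set lg : V →₀ ℝ := Finsupp.onFinset T (fun v => if v ∈ T then g v else 0)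
    (by intro v hv; by_contra hvT; simp [hvT] at hv) with hlg
  have hlgval : ∀ v ∈ T, lg v = g v := by intro v hv; simp [hlg, hv]
  have hlgsum : lg.sum (fun v c => c • v) = ∑ v ∈ T, g v • v := by
    rw [Finsupp.sum_of_support_subset lg Finsupp.support_onFinset_subset _
      (by intro v _; simp)]
    apply Finset.sum_congr rfl
    intro v hv
    rw [hlgval v hv]
  set L := lg - d with hL
  have hLsupp : ↑L.support ⊆ Sg := by
    intro v hv
    rw [Finset.mem_coe] at hv
    have := Finsupp.support_sub (f := lg) (g := d) hv
    rw [Finset.mem_union] at this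
    rcases this with h | h
    · have := Finsupp.support_onFinset_subset h
      exact (hT this).1
    · exact hSgI (hd1 h)
  have hLsum : L.sum (fun v c => c • v) = 0 := by
    rw [hL, Finsupp.sum_sub_index (by intro a b1 b2; rw [sub_smul])]
    rw [hlgsum, hd2, sub_self]
  have hL0 := hSgind L hLsupp hLsum
  intro v hv
  have hLv : L v = 0 := by rw [hL0]; rfl
  have hdv : d v = 0 := by
    by_contra h
    have hmem : v ∈ d.support := Finsupp.mem_support_iff.mpr h
    exact (hT hv).2 (hd1 hmem)
  rw [hL, Finsupp.sub_apply, hlgval v hv, hdv, sub_zero] at hLv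
  exact hLv

lemma image_finsupp_indep (π : V →ₗ[ℝ] W) (Sg SgI : Set V)
    (hSgind : ∀ l : V →₀ ℝ, ↑l.support ⊆ Sg → l.sum (fun v c => c • v) = 0 → l = 0)
    (hSgI : SgI ⊆ Sg)
    (hker : ∀ y : V, y ∈ Submodule.span ℝ Sg → π y = 0 → y ∈ Submodule.span ℝ SgI)
    (T : Finset V) (hT : ↑T = Sg \ SgI) :
    ∀ l : W →₀ ℝ, ↑l.support ⊆ π '' (Sg \ SgI) →
      l.sum (fun w c => c • w) = 0 → l = 0 := by
  classical
  have hTsub : ↑T ⊆ Sg \ SgI := hT.le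
  have hinj : ∀ x ∈ T, ∀ y ∈ T, π x = π y → x = y := by
    intro x hx y hy hxy
    by_contra hne
    have hpair : ↑({x, y} : Finset V) ⊆ Sg \ SgI := by
      intro v hv
      simp only [Finset.coe_insert, Finset.coe_singleton, Set.mem_insert_iff,
        Set.mem_singleton_iff] at hv
      rcases hv with rfl | rfl
      · exact hTsub hx
      · exact hTsub hy
    have hsum : ∑ v ∈ ({x, y} : Finset V), (if v = x then (1:ℝ) else -1) • π v = 0 := by
      rw [Finset.sum_pair hne]
      rw [if_pos rfl, if_neg (Ne.symm hne)]
      rw [hxy]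
      module
    have := image_indep π Sg SgI hSgind hSgI hker _ hpair _ hsum x
      (Finset.mem_insert_self x {y})
    rw [if_pos rfl] at this
    norm_num at this
  intro l hlsupp hlsum
  have himg : ↑(T.image π) = π '' (Sg \ SgI) := by
    rw [Finset.coe_image, hT]
  have hs1 : ∑ w ∈ T.image π, l w • w = ∑ v ∈ T, l (π v) • π v :=
    Finset.sum_image hinj
  have hs2 : ∑ w ∈ T.image π, l w • w = l.sum fun w c => c • w := by
    symm
    rw [Finsupp.sum]
    apply Finset.sum_subset
    · intro w hw
      have : w ∈ π '' (Sg \ SgI) := hlsupp (Finset.mem_coe.mpr hw)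
      rw [← himg] at this
      exact Finset.mem_coe.mp this
    · intro w _ hw
      rw [Finsupp.notMem_support_iff.mp hw, zero_smul]
  have hsum2 : ∑ v ∈ T, l (π v) • π v = 0 := by
    rw [← hs1, hs2, hlsum]
  have hall := image_indep π Sg SgI hSgind hSgI hker T hTsub _ hsum2
  ext w
  by_contra hw
  have hwmem : w ∈ l.support := Finsupp.mem_support_iff.mpr (fun h => hw (by rw [h]; rfl))
  have : w ∈ π '' (Sg \ SgI) := hlsupp (Finset.mem_coe.mpr hwmem)
  rw [← himg, Finset.coe_image] at this
  obtain ⟨v, hv, rfl⟩ := this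
  have := hall v (Finset.mem_coe.mp hv)
  exact hw (by rw [this]; rfl)

lemma mapDomain_nonneg {α β : Type*} (h : α → β) (c : α →₀ ℤ) (hc : ∀ a, 0 ≤ c a) :
    ∀ b, 0 ≤ Finsupp.mapDomain h c b := by
  classical
  intro b
  rw [Finsupp.mapDomain, Finsupp.sum_apply]
  apply Finset.sum_nonneg
  intro a _
  show (0:ℤ) ≤ Finsupp.single (h a) (c a) b
  rw [Finsupp.single_apply]
  split
  · exact hc a
  · exact le_rfl

end Glue
lemma sum_neg_finsupp {W : Type*} [AddCommGroup W] [Module ℝ W] (c : W →₀ ℤ) :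
    (-c).sum (fun w k => (k:ℝ) • w) = - c.sum (fun w k => (k:ℝ) • w) := by
  rw [Finsupp.sum, Finsupp.sum, Finsupp.support_neg, ← Finset.sum_neg_distrib]
  apply Finset.sum_congr rfl
  intro w _
  rw [Finsupp.neg_apply]
  push_cast
  rw [neg_smul]

lemma build_coeff {W : Type*} [AddCommGroup W] [Module ℝ W]
    (π : V →ₗ[ℝ] W) (Sgset : Set V) (n : V →₀ ℕ) (b : V)
    (hsupp : ↑n.support ⊆ Sgset) (hsum : b = n.sum fun v k => (k:ℝ) • v) :
    ∃ c : (W →₀ ℤ), ↑c.support ⊆ π '' {s | s ∈ Sgset ∧ π s ≠ 0} ∧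
      π b = c.sum (fun w k => (k:ℝ) • w) ∧ (∀ w, 0 ≤ c w) := by
  classical
  set cZ : V →₀ ℤ := n.mapRange (fun k : ℕ => (k:ℤ)) (by simp) with hcZ
  set cW := cZ.mapDomain π with hcW
  refine ⟨cW.erase 0, ?_, ?_, ?_⟩
  · intro w hw
    rw [Finset.mem_coe, Finsupp.support_erase, Finset.mem_erase] at hw
    obtain ⟨hw0, hwmem⟩ := hw
    have hmem2 := Finsupp.mapDomain_support hwmem
    rw [Finset.mem_image] at hmem2
    obtain ⟨v, hv, rfl⟩ := hmem2
    have hvn : v ∈ n.support := Finsupp.support_mapRange hv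
    exact ⟨v, ⟨hsupp hvn, hw0⟩, rfl⟩
  · have h1 : π b = cW.sum (fun w k => (k:ℝ) • w) := by
      rw [hsum, map_finsuppSum]
      simp only [map_smul]
      rw [hcW, Finsupp.sum_mapDomain_index (by intro w; simp)
        (by intro w k1 k2; push_cast; rw [add_smul])]
      rw [hcZ, Finsupp.sum_mapRange_index (by intro v; simp)]
      apply Finsupp.sum_congr
      intro v _
      norm_num
    rw [h1]
    rw [Finsupp.sum_of_support_subset cW (Finset.subset_insert (0:W) cW.support) _
        (by intro w _; simp),
      Finsupp.sum_of_support_subset (cW.erase 0)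
        (((Finsupp.support_erase (a := (0:W)) (f := cW)) ▸
          Finset.erase_subset (0:W) cW.support).trans (Finset.subset_insert _ _)) _
        (by intro w _; simp)]
    apply Finset.sum_congr rfl
    intro w _
    by_cases hw0 : w = (0:W)
    · subst hw0; simp
    · rw [Finsupp.erase_ne hw0]
  · intro w
    by_cases hw0 : w = (0:W)
    · subst hw0; rw [Finsupp.erase_same]
    · rw [Finsupp.erase_ne hw0]
      apply mapDomain_nonneg
      intro v
      rw [hcZ, Finsupp.mapRange_apply]
      exact Int.ofNat_nonneg _
def IsRootSystem (Δ : Set V) : Prop :=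
  Δ.Finite ∧ (0 : V) ∉ Δ ∧ (∀ α ∈ Δ, -α ∈ Δ) ∧
    ∀ α ∈ Δ, ∃ f : V →ₗ[ℝ] ℝ, f α = 2 ∧ (∀ β ∈ Δ, ∃ n : ℤ, f β = (n : ℝ)) ∧
      ∀ β ∈ Δ, β - f β • α ∈ Δ

def IsBase {W : Type*} [AddCommGroup W] [Module ℝ W] (Δ S : Set W) : Prop :=
  S ⊆ Δ ∧ LinearIndependent ℝ ((↑) : S → W) ∧
    ∀ β ∈ Δ, ∃ c : W →₀ ℤ, ↑c.support ⊆ S ∧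
      β = c.sum (fun v n => (n : ℝ) • v) ∧ ((∀ v, 0 ≤ c v) ∨ (∀ v, c v ≤ 0))

theorem stmt7_aux {W : Type*} [AddCommGroup W] [Module ℝ W]
    (Δ Sg₀ I : Set V) (hΔ : IsRootSystem Δ)
    (h₀ : IsBase Δ Sg₀) (hI : I ⊆ Sg₀)
    (π : V →ₗ[ℝ] W)
    (hker0 : ∀ v : V, π v = 0 ↔ v ∈ Submodule.span ℝ I)
    (ν : W)
    (hν : ν ∈ (π '' Δ) \ {0})
    (hprim : ∀ t : ℚ, (t : ℝ) • ν ∈ (π '' Δ) \ {0} → 1 ≤ |t|) :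
    ∃ S : Set W, IsBase ((π '' Δ) \ {0}) S ∧ ν ∈ S := by
  classical
  obtain ⟨hfin, h0, hneg, hcor⟩ := hΔ
  choose ff hff2 hffint hffrefl using hcor
  set f : V → (V →ₗ[ℝ] ℝ) := fun a => if ha : a ∈ Δ then ff a ha else 0 with hfdef
  have hf2 : ∀ a ∈ Δ, f a a = 2 := fun a ha => by
    simp only [hfdef, dif_pos ha]; exact hff2 a ha
  have hfint : ∀ a ∈ Δ, ∀ b ∈ Δ, ∃ n : ℤ, f a b = (n:ℝ) := fun a ha b hb => by
    simp only [hfdef, dif_pos ha]; exact hffint a ha b hb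
  have hrefl : ∀ a ∈ Δ, ∀ b ∈ Δ, b - f a b • a ∈ Δ := fun a ha b hb => by
    simp only [hfdef, dif_pos ha]; exact hffrefl a ha b hb
  obtain ⟨⟨b₀, hb₀Δ, hb₀⟩, hν0'⟩ := hν
  have hν0 : ν ≠ 0 := by simpa using hν0'
  obtain ⟨hSg₀Δ, hSg₀ind, hSg₀coeff⟩ := h₀
  have hSg₀find : ∀ l : V →₀ ℝ, ↑l.support ⊆ Sg₀ → l.sum (fun v c => c • v) = 0 → l = 0 := by
    intro l hl hs
    apply linearIndepOn_iff.mp (linearIndependent_subtype_iff.mp hSg₀ind) l ((Finsupp.mem_supported ℝ l).mpr hl)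
    rw [Finsupp.linearCombination_apply]
    simpa using hs
  have hSg₀fin : Sg₀.Finite := hfin.subset hSg₀Δ
  -- line rationality
  have hline : ∀ μ, μ ∈ (π '' Δ) \ {0} → ∀ t : ℝ, μ = t • ν → ∃ q : ℚ, t = (q:ℝ) := by
    intro μ hμ t hμt
    set SgI₀ := {s | s ∈ Sg₀ ∧ π s = 0} with hSgI₀
    have hSgI₀sub : SgI₀ ⊆ Sg₀ := fun s hs => hs.1
    have hker' : ∀ y : V, y ∈ Submodule.span ℝ Sg₀ → π y = 0 → y ∈ Submodule.span ℝ SgI₀ := by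
      intro y _ hy0
      have hyK : y ∈ Submodule.span ℝ I := (hker0 y).mp hy0
      have hKle : Submodule.span ℝ I ≤ Submodule.span ℝ SgI₀ := by
        rw [Submodule.span_le]
        intro i hiI
        exact Submodule.subset_span ⟨hI hiI, (hker0 i).mpr (Submodule.subset_span hiI)⟩
      exact hKle hyK
    set T₀ := hSg₀fin.toFinset.filter (fun s => π s ≠ 0) with hT₀
    have hT₀sub : ↑T₀ ⊆ Sg₀ \ SgI₀ := by
      intro v hv
      rw [Finset.mem_coe, hT₀, Finset.mem_filter, Set.Finite.mem_toFinset] at hv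
      exact ⟨hv.1, fun hmem => hv.2 hmem.2⟩
    have hrep : ∀ (b : V), ∀ c : V →₀ ℤ, ↑c.support ⊆ Sg₀ →
        b = c.sum (fun v k => (k:ℝ) • v) → π b = ∑ v ∈ T₀, (c v : ℝ) • π v := by
      intro b c hcs hcsum
      rw [hcsum, map_finsuppSum]
      simp only [map_smul]
      rw [Finsupp.sum_of_support_subset c
        (fun v hv => hSg₀fin.mem_toFinset.mpr (hcs hv)) _ (by intro v _; simp)]
      rw [hT₀, Finset.sum_filter_of_ne]
      intro v _ hvne
      intro hv0
      rw [hv0, smul_zero] at hvne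
      exact hvne rfl
    obtain ⟨⟨b, hbΔ, hbπ⟩, hμ0⟩ := hμ
    obtain ⟨c, hc1, hc2, _⟩ := hSg₀coeff b hbΔ
    obtain ⟨c', hc'1, hc'2, _⟩ := hSg₀coeff b₀ hb₀Δ
    have hμrep : μ = ∑ v ∈ T₀, (c v : ℝ) • π v := by
      rw [← hbπ]; exact hrep b c hc1 hc2
    have hνrep : ν = ∑ v ∈ T₀, (c' v : ℝ) • π v := by
      rw [← hb₀]; exact hrep b₀ c' hc'1 hc'2
    have hzero : ∑ v ∈ T₀, ((c v : ℝ) - t * c' v) • π v = 0 := by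
      have : ∑ v ∈ T₀, ((c v : ℝ) - t * c' v) • π v
          = (∑ v ∈ T₀, (c v : ℝ) • π v) - t • (∑ v ∈ T₀, (c' v : ℝ) • π v) := by
        rw [Finset.smul_sum, ← Finset.sum_sub_distrib]
        apply Finset.sum_congr rfl
        intro v _
        rw [sub_smul, smul_smul]
      rw [this, ← hμrep, ← hνrep, hμt, sub_self]
    have hall := image_indep π Sg₀ SgI₀ hSg₀find hSgI₀sub hker' T₀ hT₀sub _ hzero
    by_cases hex : ∀ v ∈ T₀, (c' v : ℝ) = 0
    · exfalso
      apply hν0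
      rw [hνrep]
      apply Finset.sum_eq_zero
      intro v hv
      rw [hex v hv, zero_smul]
    · push_neg at hex
      obtain ⟨v₀, hv₀, hv₀ne⟩ := hex
      have := hall v₀ hv₀
      have ht : t = (c v₀ : ℝ) / (c' v₀ : ℝ) := by
        field_simp at this ⊢
        linarith
      refine ⟨(c v₀ : ℚ) / (c' v₀ : ℚ), ?_⟩
      rw [ht]
      push_cast
      ring
  -- construction of φ
  set evν : Module.Dual ℝ W →ₗ[ℝ] ℝ := Module.Dual.eval ℝ W ν with hevν
  set K' := LinearMap.ker evν with hK'
  set aset := hfin.toFinset.filter (fun a => π a ∉ Submodule.span ℝ {ν}) with haset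
  set Z : V → Submodule ℝ ↥K' := fun a =>
    LinearMap.ker ((Module.Dual.eval ℝ W (π a)).comp K'.subtype) with hZdef
  have hZproper : ∀ a ∈ aset, Z a ≠ ⊤ := by
    intro a ha
    rw [haset, Finset.mem_filter] at ha
    obtain ⟨g, hgν, hgμ⟩ := exists_dual_vanish ν (π a) ha.2
    intro htop
    have hgK' : g ∈ K' := by
      rw [hK', LinearMap.mem_ker, hevν]
      exact hgν
    have : (⟨g, hgK'⟩ : ↥K') ∈ Z a := htop ▸ Submodule.mem_top
    rw [hZdef, LinearMap.mem_ker, LinearMap.comp_apply] at this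
    exact hgμ this
  obtain ⟨ζ', hζ'⟩ := union_proper_subspaces (X := ↥K') aset Z hZproper
  set ζ : Module.Dual ℝ W := (ζ' : Module.Dual ℝ W) with hζdef
  have hζν : ζ ν = 0 := ζ'.2
  have hζa : ∀ a ∈ Δ, π a ∉ Submodule.span ℝ {ν} → ζ (π a) ≠ 0 := by
    intro a haΔ hns
    have hmem : a ∈ aset := by
      rw [haset, Finset.mem_filter]
      exact ⟨hfin.mem_toFinset.mpr haΔ, hns⟩
    have := hζ' a hmem
    intro hzero
    apply this
    rw [hZdef, LinearMap.mem_ker, LinearMap.comp_apply]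
    exact hzero
  obtain ⟨ξ₀, hξ₀⟩ := exists_dual_ne_zero ν hν0
  set ξ : Module.Dual ℝ W := (ξ₀ ν)⁻¹ • ξ₀ with hξdef
  have hξν : ξ ν = 1 := by
    rw [hξdef]
    simp [inv_mul_cancel₀ hξ₀]
  obtain ⟨δ, hδpos, hδ⟩ := exists_eps aset (fun a => |ζ (π a)|) (fun a => |ξ (π a)| + 1)
    (fun a ha => abs_pos.mpr (by
      rw [haset, Finset.mem_filter, Set.Finite.mem_toFinset] at ha
      exact hζa a ha.1 ha.2))
  set φ : Module.Dual ℝ W := ζ + δ • ξ with hφdef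
  have hφν : φ ν = δ := by
    rw [hφdef]
    simp [hζν, hξν]
  have hφa : ∀ a ∈ Δ, π a ∉ Submodule.span ℝ {ν} →
      (δ < |φ (π a)|) := by
    intro a haΔ hns
    have hmem : a ∈ aset := by
      rw [haset, Finset.mem_filter]
      exact ⟨hfin.mem_toFinset.mpr haΔ, hns⟩
    have h1 := hδ a hmem
    rw [abs_of_pos (by positivity)] at h1
    have hφval : φ (π a) = ζ (π a) + δ * ξ (π a) := by
      rw [hφdef]; simp
    have htri : |ζ (π a)| ≤ |φ (π a)| + δ * |ξ (π a)| := by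
      have hz : ζ (π a) = φ (π a) - δ * ξ (π a) := by rw [hφval]; ring
      rw [hz]
      calc |φ (π a) - δ * ξ (π a)| ≤ |φ (π a)| + |δ * ξ (π a)| := abs_sub _ _
        _ = |φ (π a)| + δ * |ξ (π a)| := by rw [abs_mul, abs_of_pos hδpos]
    nlinarith
  -- ψ generic on Δ
  set Zψ : V → Submodule ℝ (Module.Dual ℝ V) := fun a =>
    LinearMap.ker (Module.Dual.eval ℝ V a) with hZψdef
  have hZψproper : ∀ a ∈ hfin.toFinset, Zψ a ≠ ⊤ := by
    intro a ha
    rw [Set.Finite.mem_toFinset] at ha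
    obtain ⟨g, hg⟩ := exists_dual_ne_zero a (fun h => h0 (h ▸ ha))
    intro htop
    have : g ∈ Zψ a := htop ▸ Submodule.mem_top
    rw [hZψdef, LinearMap.mem_ker] at this
    exact hg this
  obtain ⟨ψ, hψ'⟩ := union_proper_subspaces hfin.toFinset Zψ hZψproper
  have hψa : ∀ a ∈ Δ, ψ a ≠ 0 := by
    intro a haΔ hzero
    apply hψ' a (hfin.mem_toFinset.mpr haΔ)
    rw [hZψdef, LinearMap.mem_ker]
    exact hzero
  -- ε and F
  set φV : V →ₗ[ℝ] ℝ := φ ∘ₗ π with hφVdef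
  have hφVeq : ∀ a, φV a = φ (π a) := fun a => rfl
  obtain ⟨ε, hεpos, hε⟩ := exists_eps (hfin.toFinset.filter (fun a => φV a ≠ 0))
    (fun a => |φV a|) (fun a => ψ a)
    (fun a ha => abs_pos.mpr (Finset.mem_filter.mp ha).2)
  have hεa : ∀ a ∈ Δ, φV a ≠ 0 → ε * |ψ a| < |φV a| := by
    intro a ha h
    exact hε a (Finset.mem_filter.mpr ⟨hfin.mem_toFinset.mpr ha, h⟩)
  set F : V →ₗ[ℝ] ℝ := φV + ε • ψ with hFdef
  have hFval : ∀ a, F a = φV a + ε * ψ a := fun a => by rw [hFdef]; simp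
  have hφVne : ∀ a ∈ Δ, π a ≠ 0 → φV a ≠ 0 := by
    intro a haΔ hne
    by_cases hsp : π a ∈ Submodule.span ℝ {ν}
    · obtain ⟨t, ht⟩ := Submodule.mem_span_singleton.mp hsp
      have htne : t ≠ 0 := by
        rintro rfl
        rw [zero_smul] at ht
        exact hne ht.symm
      rw [hφVeq, ← ht, map_smul, smul_eq_mul, hφν]
      exact mul_ne_zero htne hδpos.ne'
    · rw [hφVeq]
      intro h
      have := hφa a haΔ hsp
      rw [h] at this
      simp at this
      linarith
  have hφVmin : ∀ a ∈ Δ, π a ≠ 0 → π a ≠ ν → 0 < φV a → δ < φV a := by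
    intro a haΔ hne hnν hpos
    by_cases hsp : π a ∈ Submodule.span ℝ {ν}
    · obtain ⟨t, ht⟩ := Submodule.mem_span_singleton.mp hsp
      have htne : t ≠ 0 := by
        rintro rfl
        rw [zero_smul] at ht
        exact hne ht.symm
      have hφt : φV a = t * δ := by
        rw [hφVeq, ← ht, map_smul, smul_eq_mul, hφν]
      obtain ⟨q, hq⟩ := hline (π a) ⟨⟨a, haΔ, rfl⟩, hne⟩ t ht.symm
      have hmemR : ((q:ℝ)) • ν ∈ (π '' Δ) \ {0} := by
        rw [← hq, ht]
        exact ⟨⟨a, haΔ, rfl⟩, hne⟩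
      have habs := hprim q hmemR
      have htpos : 0 < t := by
        by_contra hc
        push_neg at hc
        have : φV a ≤ 0 := by
          rw [hφt]
          exact mul_nonpos_of_nonpos_of_nonneg hc hδpos.le
        linarith
      have ht1 : 1 ≤ t := by
        rw [hq]
        have : (0:ℚ) < q := by
          have : (0:ℝ) < (q:ℝ) := hq ▸ htpos
          exact_mod_cast this
        have : |q| = q := abs_of_pos this
        rw [this] at habs
        exact_mod_cast habs
      have htne1 : t ≠ 1 := by
        intro h
        rw [h, one_smul] at ht
        exact hnν ht.symm
      rw [hφt]
      have ht1' : 1 < t := lt_of_le_of_ne ht1 (Ne.symm htne1)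
      nlinarith
    · have h2 := hφa a haΔ hsp
      have h3 : φ (π a) = φV a := (hφVeq a).symm
      rw [h3, abs_of_pos hpos] at h2
      exact h2
  have hFne : ∀ a ∈ Δ, F a ≠ 0 := by
    intro a haΔ h
    by_cases hv : φV a = 0
    · rw [hFval, hv, zero_add] at h
      exact hψa a haΔ (by
        rcases mul_eq_zero.mp h with h' | h'
        · exact absurd h' hεpos.ne'
        · exact h')
    · have h1 := hεa a haΔ hv
      rw [hFval] at h
      have : φV a = -(ε * ψ a) := by linarith
      have : |φV a| = ε * |ψ a| := by
        rw [this, abs_neg, abs_mul, abs_of_pos hεpos]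
      linarith
  have hFsign : ∀ a ∈ Δ, 0 < F a → 0 ≤ φV a := by
    intro a haΔ hFa
    by_contra hc
    push_neg at hc
    have h1 := hεa a haΔ hc.ne
    rw [abs_of_neg hc] at h1
    have : ε * ψ a ≤ ε * |ψ a| := by
      apply mul_le_mul_of_nonneg_left (le_abs_self _) hεpos.le
    rw [hFval] at hFa
    linarith
  have hφpos_F : ∀ a ∈ Δ, 0 < φV a → 0 < F a := by
    intro a haΔ hp
    have h1 := hεa a haΔ hp.ne'
    rw [abs_of_pos hp] at h1
    have : -(ε * |ψ a|) ≤ ε * ψ a := by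
      have : -|ψ a| ≤ ψ a := neg_abs_le _
      nlinarith
    rw [hFval]
    linarith
  -- indecomposables
  set Sg := Indec Δ F with hSgdef
  have hSgsub : Sg ⊆ Δ := fun s hs => hs.1.1
  have hSgPos : Sg ⊆ Pos Δ F := fun s hs => hs.1
  have hSgfin : Sg.Finite := hfin.subset hSgsub
  have hSgind := indec_independent hfin h0 hneg hf2 hfint hrefl F hFne
  set SgI := {s | s ∈ Sg ∧ π s = 0} with hSgIdef
  have hSgIsub : SgI ⊆ Sg := fun s hs => hs.1
  -- support of null decompositions
  have hsuppI : ∀ a, a ∈ Pos Δ F → π a = 0 → ∀ n : V →₀ ℕ, ↑n.support ⊆ Sg →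
      a = n.sum (fun v k => (k:ℝ) • v) → ↑n.support ⊆ SgI := by
    intro a haP ha0 n hns hnsum v hv
    rw [Finset.mem_coe] at hv
    refine ⟨hns hv, ?_⟩
    have hzero : (0:ℝ) = ∑ w ∈ n.support, (n w : ℝ) * φV w := by
      have hφa0 : φV a = 0 := by rw [hφVeq, ha0, map_zero]
      calc (0:ℝ) = φV a := hφa0.symm
        _ = ∑ w ∈ n.support, (n w : ℝ) * φV w := by
            rw [hnsum, map_finsuppSum]
            rw [Finsupp.sum]
            apply Finset.sum_congr rfl
            intro w _
            rw [map_smul, smul_eq_mul]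
    have hnonneg : ∀ w ∈ n.support, 0 ≤ (n w:ℝ) * φV w := by
      intro w hw
      apply mul_nonneg (by positivity)
      exact hFsign w (hSgsub (hns hw)) (hns hw).1.2
    have hterm := (Finset.sum_eq_zero_iff_of_nonneg hnonneg).mp hzero.symm v hv
    have hnv : n v ≠ 0 := Finsupp.mem_support_iff.mp hv
    have hφv : φV v = 0 := by
      rcases mul_eq_zero.mp hterm with h | h
      · exact absurd (by exact_mod_cast h) hnv
      · exact h
    by_contra hπv
    exact (hφVne v (hSgsub (hns hv)) hπv) hφv
  -- kernel condition
  have hkerSg : ∀ y : V, y ∈ Submodule.span ℝ Sg → π y = 0 → y ∈ Submodule.span ℝ SgI := by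
    intro y _ hy0
    have hyK : y ∈ Submodule.span ℝ I := (hker0 y).mp hy0
    have hmem : ∀ b, b ∈ Pos Δ F → π b = 0 → b ∈ Submodule.span ℝ SgI := by
      intro b hbP hb0
      obtain ⟨n, hn1, hn2⟩ := pos_decomp hfin F hbP
      have hsub := hsuppI b hbP hb0 n hn1 hn2
      rw [hn2, Finsupp.sum]
      apply Submodule.sum_mem
      intro w hw
      exact Submodule.smul_mem _ _ (Submodule.subset_span (hsub hw))
    have hKle : Submodule.span ℝ I ≤ Submodule.span ℝ SgI := by
      rw [Submodule.span_le]
      intro i hiI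
      have hiΔ : i ∈ Δ := hSg₀Δ (hI hiI)
      have hπi : π i = 0 := (hker0 i).mpr (Submodule.subset_span hiI)
      rcases (hFne i hiΔ).lt_or_gt with hlt | hgt
      · have hniΔ : -i ∈ Δ := hneg i hiΔ
        have hres := hmem (-i) ⟨hniΔ, by rw [map_neg]; linarith⟩
          (by rw [map_neg, hπi, neg_zero])
        have := Submodule.neg_mem _ hres
        rwa [neg_neg] at this
      · exact hmem i ⟨hiΔ, hgt⟩ hπi
    exact hKle hyK
  -- the base S
  set S := π '' (Sg \ SgI) with hSdef
  have hdiffeq : Sg \ SgI = {s | s ∈ Sg ∧ π s ≠ 0} := by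
    ext s
    constructor
    · rintro ⟨h1, h2⟩
      exact ⟨h1, fun h => h2 ⟨h1, h⟩⟩
    · rintro ⟨h1, h2⟩
      exact ⟨h1, fun h => h2 h.2⟩
  set T := hSgfin.toFinset.filter (fun s => π s ≠ 0) with hTdef
  have hTset : ↑T = Sg \ SgI := by
    rw [hdiffeq]
    ext v
    rw [Finset.mem_coe, hTdef, Finset.mem_filter, Set.Finite.mem_toFinset]
    exact Iff.rfl
  have hWind := image_finsupp_indep π Sg SgI hSgind hSgIsub hkerSg T hTset
  refine ⟨S, ⟨?_, ?_, ?_⟩, ?_⟩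
  · -- S ⊆ R
    rintro w ⟨s, hs, rfl⟩
    rw [hdiffeq] at hs
    exact ⟨⟨s, hSgsub hs.1, rfl⟩, by simpa using hs.2⟩
  · -- linear independence
    apply linearIndependent_subtype_iff.mpr (linearIndepOn_iff.mpr ?_)
    intro l hl hl0
    apply hWind l ((Finsupp.mem_supported ℝ l).mp hl)
    rw [Finsupp.linearCombination_apply] at hl0
    simpa using hl0
  · -- coefficients
    rintro β ⟨⟨b, hbΔ, rfl⟩, hb0⟩
    rcases (hFne b hbΔ).lt_or_gt with hlt | hgt
    · obtain ⟨n, hn1, hn2⟩ := pos_decomp hfin F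
        (⟨hneg b hbΔ, by rw [map_neg]; linarith⟩ : -b ∈ Pos Δ F)
      obtain ⟨c, hc1, hc2, hc3⟩ := build_coeff π Sg n (-b) hn1 hn2
      refine ⟨-c, ?_, ?_, Or.inr ?_⟩
      · rw [Finsupp.support_neg]
        rw [hSdef, hdiffeq]
        exact hc1
      · rw [sum_neg_finsupp, ← hc2, map_neg, neg_neg]
      · intro w
        rw [Finsupp.neg_apply]
        have := hc3 w
        omega
    · obtain ⟨n, hn1, hn2⟩ := pos_decomp hfin F (⟨hbΔ, hgt⟩ : b ∈ Pos Δ F)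
      obtain ⟨c, hc1, hc2, hc3⟩ := build_coeff π Sg n b hn1 hn2
      refine ⟨c, ?_, hc2, Or.inl hc3⟩
      rw [hSdef, hdiffeq]
      exact hc1
  · -- ν ∈ S
    have hπb₀ : π b₀ = ν := hb₀
    have hb₀P : b₀ ∈ Pos Δ F := by
      refine ⟨hb₀Δ, hφpos_F b₀ hb₀Δ ?_⟩
      rw [hφVeq, hπb₀, hφν]
      exact hδpos
    by_contra hνS
    obtain ⟨n, hn1, hn2⟩ := pos_decomp hfin F hb₀P
    have hδsum : δ = ∑ w ∈ n.support, (n w:ℝ) * φV w := by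
      calc δ = φV b₀ := by rw [hφVeq, hπb₀, hφν]
        _ = ∑ w ∈ n.support, (n w:ℝ) * φV w := by
            rw [hn2, map_finsuppSum, Finsupp.sum]
            apply Finset.sum_congr rfl
            intro w _
            rw [map_smul, smul_eq_mul]
    have hterm : ∀ w ∈ n.support, 0 ≤ (n w:ℝ) * φV w := by
      intro w hw
      apply mul_nonneg (by positivity)
      exact hFsign w (hSgsub (hn1 hw)) (hn1 hw).1.2
    have hexist : ∃ w ∈ n.support, (n w:ℝ) * φV w ≠ 0 := by
      by_contra hc
      push_neg at hc
      have : δ = 0 := by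
        rw [hδsum]
        exact Finset.sum_eq_zero hc
      exact hδpos.ne' this
    obtain ⟨w₀, hw₀, hwne⟩ := hexist
    have hw₀Sg : w₀ ∈ Sg := hn1 hw₀
    have hφw₀ : φV w₀ ≠ 0 := (mul_ne_zero_iff.mp hwne).2
    have hπw₀ : π w₀ ≠ 0 := by
      intro h
      exact hφw₀ (by rw [hφVeq, h, map_zero])
    have hπw₀ν : π w₀ ≠ ν := by
      intro h
      apply hνS
      rw [hSdef, hdiffeq]
      exact ⟨w₀, ⟨hw₀Sg, hπw₀⟩, h⟩
    have hφVw₀pos : 0 < φV w₀ :=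
      lt_of_le_of_ne (hFsign w₀ (hSgsub hw₀Sg) hw₀Sg.1.2) (Ne.symm hφw₀)
    have hgt := hφVmin w₀ (hSgsub hw₀Sg) hπw₀ hπw₀ν hφVw₀pos
    have h1 : (n w₀ : ℝ) * φV w₀ ≤ δ := by
      rw [hδsum]
      exact Finset.single_le_sum hterm hw₀
    have h2 : 1 ≤ (n w₀ : ℝ) := by
      exact_mod_cast Nat.one_le_iff_ne_zero.mpr (Finsupp.mem_support_iff.mp hw₀)
    have h3 : φV w₀ ≤ (n w₀:ℝ) * φV w₀ := le_mul_of_one_le_left hφVw₀pos.le h2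
    linarith


/-- if `ν` is a primitive element of a Kostant root system
`R = π(Δ) \ {0}` (no rational multiple `t • ν` with `0 < |t| < 1` lies in `R`),
then there is a base of `R` containing `ν`. -/
theorem stmt7 (Δ Sg₀ I : Set V) (hΔ : IsRootSystem Δ)
    (h₀ : IsBase Δ Sg₀) (hI : I ⊆ Sg₀)
    (ν : V ⧸ Submodule.span ℝ I)
    (hν : ν ∈ ((Submodule.span ℝ I).mkQ '' Δ) \ {0})
    (hprim : ∀ t : ℚ, (t : ℝ) • ν ∈ ((Submodule.span ℝ I).mkQ '' Δ) \ {0} → 1 ≤ |t|) :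
    ∃ S : Set (V ⧸ Submodule.span ℝ I),
      IsBase (((Submodule.span ℝ I).mkQ '' Δ) \ {0}) S ∧ ν ∈ S := by
  apply stmt7_aux Δ Sg₀ I hΔ h₀ hI (Submodule.span ℝ I).mkQ ?_ ν hν hprim
  intro v
  rw [Submodule.mkQ_apply, Submodule.Quotient.mk_eq_zero]
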